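/- Every partial sum of the sequence (θ_m) is strictly positive: Σ_{m=0}^{n} θ_m > 0 for every integer n ≥ 0. -/
import Mathlib


/-- The sequence `θ_m`. -/
noncomputable def seqTheta (α : ℝ) : ℕ → ℝ
  | 0 => ((α + 1) / (2 * α)) ^ α
  | 1 => (α - 1) * (2 * α + 1) / (α + 1) * seqTheta α 0
  | (m + 2) =>
      2 * α / (((m : ℝ) + 2) * (1 + α)) *
        (((((m : ℝ) + 2) - 1) / α - (1 - α) / (2 * α) * (2 * α + 1)) * seqTheta α (m + 1) +
          (1 - α) / (2 * α) * (3 - ((m : ℝ) + 2)) * seqTheta α m)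

theorem seqTheta_partial_sum_pos (α : ℝ) (hα : α ∈ Set.Ioo (0 : ℝ) 1) :
    ∀ n : ℕ, 0 < ∑ m ∈ Finset.range (n + 1), seqTheta α m := by
  obtain ⟨hα0, hα1⟩ := hα
  set S : ℕ → ℝ := fun n => ∑ m ∈ Finset.range (n + 1), seqTheta α m with hSdef
  have hαne : α ≠ 0 := ne_of_gt hα0
  have h1α : (0 : ℝ) < 1 + α := by linarith
  have h1αne : (1 : ℝ) + α ≠ 0 := ne_of_gt h1α
  have hα1ne : α + 1 ≠ 0 := by linarith
  have hθ0 : 0 < seqTheta α 0 := by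
    show 0 < ((α + 1) / (2 * α)) ^ α
    apply Real.rpow_pos_of_pos
    positivity
  have hSsucc : ∀ n : ℕ, S (n + 1) = S n + seqTheta α (n + 1) := by
    intro n
    simp only [hSdef]
    exact Finset.sum_range_succ _ _
  have hS0 : S 0 = seqTheta α 0 := by simp [hSdef]
  have hθ1 : seqTheta α 1 = (α - 1) * (2 * α + 1) / (α + 1) * seqTheta α 0 := rfl
  have hθ1' : (α + 1) * seqTheta α 1 = (α - 1) * (2 * α + 1) * seqTheta α 0 := by
    rw [hθ1]; field_simp
  have hθrec : ∀ m : ℕ, seqTheta α (m + 2) =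
      2 * α / (((m : ℝ) + 2) * (1 + α)) *
        (((((m : ℝ) + 2) - 1) / α - (1 - α) / (2 * α) * (2 * α + 1)) * seqTheta α (m + 1) +
          (1 - α) / (2 * α) * (3 - ((m : ℝ) + 2)) * seqTheta α m) := fun m => rfl
  have hS1 : S 1 = 2 * α ^ 2 / (1 + α) * seqTheta α 0 := by
    rw [hSsucc, hS0, hθ1]
    field_simp
    ring
  have hS1pos : 0 < S 1 := by
    rw [hS1]; positivity
  -- The second-order recurrence for partial sums
  have hrec : ∀ n : ℕ, (1 + α) * ((n : ℝ) + 2) * S (n + 2)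
      = (2 * ((n : ℝ) + 1) + 2 * α ^ 2) * S (n + 1) - (1 - α) * (n : ℝ) * S n := by
    intro n
    induction n with
    | zero =>
      have h2 := hθrec 0
      have h2' : (1 + α) * 2 * seqTheta α 2
          = (2 - (1 - α) * (2 * α + 1)) * seqTheta α 1 + (1 - α) * seqTheta α 0 := by
        rw [h2]
        push_cast
        field_simp
        ring
      have e2 : S 2 = S 1 + seqTheta α 2 := hSsucc 1
      have e1 : S 1 = seqTheta α 0 + seqTheta α 1 := by rw [hSsucc 0, hS0]
      push_cast
      rw [hS0]
      linear_combination h2' + hθ1' + (1 + α) * 2 * e2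
        - (2 - (1 - α) * (2 * α + 1) + (α + 1)) * e1 + 2 * (1 + α) * e1
    | succ k ih =>
      have h3 := hθrec (k + 1)
      rw [show k + 1 + 2 = k + 3 by omega, show k + 1 + 1 = k + 2 by omega] at h3
      have hkne : ((k : ℝ) + 1 + 2) ≠ 0 := by positivity
      have h3' : (1 + α) * ((k : ℝ) + 3) * seqTheta α (k + 3) =
          (2 * ((k : ℝ) + 2) - (1 - α) * (2 * α + 1)) * seqTheta α (k + 2)
            - (1 - α) * (k : ℝ) * seqTheta α (k + 1) := by
        rw [h3]
        push_cast
        field_simp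
        ring
      have e3 : S (k + 3) = S (k + 2) + seqTheta α (k + 3) := hSsucc (k + 2)
      have e2 : S (k + 2) = S (k + 1) + seqTheta α (k + 2) := hSsucc (k + 1)
      have e1 : S (k + 1) = S k + seqTheta α (k + 1) := hSsucc k
      rw [show k + 1 + 2 = k + 3 by omega, show k + 1 + 1 = k + 2 by omega]
      push_cast
      linear_combination ih + h3' + (1 + α) * ((k : ℝ) + 3) * e3
        - (2 * ((k : ℝ) + 2) - (1 - α) * (2 * α + 1)) * e2 + (1 - α) * (k : ℝ) * e1
  -- The invariant: positivity together with a ratio bound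
  have key : ∀ n : ℕ, 0 < S (n + 1) ∧ (1 - α) * S (n + 1) ≤ (1 + α) * S (n + 2) := by
    intro n
    induction n with
    | zero =>
      refine ⟨hS1pos, ?_⟩
      have h := hrec 0
      push_cast at h
      nlinarith [mul_pos hα0 hS1pos, mul_pos (mul_pos hα0 hα0) hS1pos]
    | succ k ih =>
      obtain ⟨h1, h2⟩ := ih
      have hS2pos : 0 < S (k + 2) := by nlinarith
      refine ⟨hS2pos, ?_⟩
      have h := hrec (k + 1)
      rw [show k + 1 + 2 = k + 3 by omega, show k + 1 + 1 = k + 2 by omega] at h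
      push_cast at h
      have hk : (0 : ℝ) ≤ (k : ℝ) + 1 := by positivity
      have hh := mul_le_mul_of_nonneg_left h2 hk
      have hn3 : (0 : ℝ) < (k : ℝ) + 3 := by positivity
      rw [show k + 1 + 2 = k + 3 by omega, show k + 1 + 1 = k + 2 by omega]
      nlinarith [hh, h, mul_pos hα0 hS2pos, mul_pos (mul_pos hα0 hα0) hS2pos, hn3,
        mul_pos hα0 (mul_pos hα0 hS2pos)]
  intro n
  match n with
  | 0 => simpa [hS0] using hθ0
  | (m + 1) => exact (key m).1
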